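/- Let (X₁,Y₁),…,(Xₙ,Yₙ), n > 3, be iid copies of a pair (X,Y) of random vectors with X ∈ ℝ^p, Y ∈ ℝ^q, let A = (|X_i − X_j|) and B = (|Y_i − Y_j|) be the Euclidean distance matrices of the two samples, and let Ã, B̃ be their U-centered matrices. Assume that E|X−X'|, E|Y−Y'|, E[|X−X'||Y−Y'|] and E[|X−X'||Y−Y''|] are finite, where (X,Y),(X',Y'),(X'',Y'') are iid. Then (Ã · B̃) := (1/(n(n−3))) Σ_{i≠j} Ã_{ij} B̃_{ij} is an unbiased estimator of the squared population distance covariance: E[(Ã · B̃)] = E[|X−X'||Y−Y'|] + E|X−X'|·E|Y−Y'| − 2E[|X−X'||Y−Y''|]. -/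

import Mathlib

open MeasureTheory ProbabilityTheory

section Helpers

open Finset

lemma sum_ite_one' {n : ℕ} (i : Fin n) (x z : ℝ) :
    ∑ k : Fin n, (if k = i then x else z) = x + ((n:ℝ) - 1) * z := by
  have h : ∀ k : Fin n, (if k = i then x else z) = (if k = i then x - z else 0) + z := by
    intro k; split_ifs <;> ring
  simp only [h, Finset.sum_add_distrib, Finset.sum_ite_eq', Finset.mem_univ, if_true,
    Finset.sum_const, Finset.card_univ, Fintype.card_fin, nsmul_eq_mul]
  ring

lemma sum_ite_two' {n : ℕ} {i j : Fin n} (hij : i ≠ j) (x y z : ℝ) :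
    ∑ k : Fin n, (if k = i then x else if k = j then y else z)
      = x + y + ((n:ℝ) - 2) * z := by
  have h : ∀ k : Fin n, (if k = i then x else if k = j then y else z)
      = (if k = i then x - z else 0) + (if k = j then y - z else 0) + z := by
    intro k; split_ifs <;> simp_all
  simp only [h, Finset.sum_add_distrib, Finset.sum_ite_eq', Finset.mem_univ, if_true,
    Finset.sum_const, Finset.card_univ, Fintype.card_fin, nsmul_eq_mul]
  ring

lemma sum_ite_three' {n : ℕ} {i j l : Fin n} (hij : i ≠ j) (hil : i ≠ l) (hjl : j ≠ l)
    (x y w z : ℝ) :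
    ∑ k : Fin n, (if k = i then x else if k = j then y else if k = l then w else z)
      = x + y + w + ((n:ℝ) - 3) * z := by
  have h : ∀ k : Fin n, (if k = i then x else if k = j then y else if k = l then w else z)
      = (if k = i then x - z else 0) + (if k = j then y - z else 0)
        + (if k = l then w - z else 0) + z := by
    intro k; split_ifs <;> simp_all
  simp only [h, Finset.sum_add_distrib, Finset.sum_ite_eq', Finset.mem_univ, if_true,
    Finset.sum_const, Finset.card_univ, Fintype.card_fin, nsmul_eq_mul]
  ring

end Helpers

/-- The U-centered matrix of an `n × n` real matrix `A`. -/
noncomputable def Ucenter {n : ℕ} (A : Matrix (Fin n) (Fin n) ℝ) :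
    Matrix (Fin n) (Fin n) ℝ :=
  Matrix.of fun i j =>
    if i = j then 0
    else A i j - (∑ l, A i l) / ((n : ℝ) - 2) - (∑ k, A k j) / ((n : ℝ) - 2)
      + (∑ k, ∑ l, A k l) / (((n : ℝ) - 1) * ((n : ℝ) - 2))

section Algebra

open Finset

set_option maxHeartbeats 1000000 in
lemma sum_ucenter_mul {n : ℕ} (hn : 3 < n) (A B : Matrix (Fin n) (Fin n) ℝ)
    (hA : ∀ i j, A i j = A j i) (hA0 : ∀ i, A i i = 0)
    (hB : ∀ i j, B i j = B j i) (hB0 : ∀ i, B i i = 0) :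
    ∑ i, ∑ j, (if i = j then (0:ℝ) else Ucenter A i j * Ucenter B i j)
      = (∑ i, ∑ j, A i j * B i j)
        - 2 / ((n:ℝ) - 2) * ∑ i, (∑ j, A i j) * (∑ j, B i j)
        + (∑ i, ∑ j, A i j) * (∑ i, ∑ j, B i j) / (((n:ℝ) - 1) * ((n:ℝ) - 2)) := by
  have hcast : (3:ℝ) < n := by exact_mod_cast hn
  have hm0 : ((n:ℝ) - 2) ≠ 0 := by nlinarith
  have hn1 : ((n:ℝ) - 1) ≠ 0 := by nlinarith
  obtain ⟨m, hmdef⟩ : ∃ m : ℝ, m = (n:ℝ) - 2 := ⟨_, rfl⟩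
  rw [← hmdef]
  set u : Fin n → ℝ := fun i => ∑ j, A i j with hu
  set v : Fin n → ℝ := fun i => ∑ j, B i j with hv
  set w : Fin n → ℝ := fun i => ∑ j, A i j * B i j with hw
  set ca : Fin n → ℝ := fun i => ∑ j, A i j * v j with hca
  set cb : Fin n → ℝ := fun i => ∑ j, u j * B i j with hcb
  have huu : ∀ i, (∑ j, A i j) = u i := fun _ => rfl
  have hvv : ∀ i, (∑ j, B i j) = v i := fun _ => rfl
  have hww : ∀ i, (∑ j, A i j * B i j) = w i := fun _ => rfl
  have hcaa : ∀ i, (∑ j, A i j * v j) = ca i := fun _ => rfl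
  have hcbb : ∀ i, (∑ j, u j * B i j) = cb i := fun _ => rfl
  obtain ⟨S, hS⟩ : ∃ S : ℝ, S = ∑ i, u i := ⟨_, rfl⟩
  obtain ⟨T, hT⟩ : ∃ T : ℝ, T = ∑ i, v i := ⟨_, rfl⟩
  obtain ⟨R, hR⟩ : ∃ R : ℝ, R = ∑ i, u i * v i := ⟨_, rfl⟩
  obtain ⟨W, hW⟩ : ∃ W : ℝ, W = ∑ i, w i := ⟨_, rfl⟩
  obtain ⟨d, hd⟩ : ∃ d : ℝ, d = S / (((n:ℝ) - 1) * m) := ⟨_, rfl⟩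
  obtain ⟨e, he⟩ : ∃ e : ℝ, e = T / (((n:ℝ) - 1) * m) := ⟨_, rfl⟩
  have hcolA : ∀ j, (∑ k, A k j) = u j := fun j => Finset.sum_congr rfl fun k _ => hA k j
  have hcolB : ∀ j, (∑ k, B k j) = v j := fun j => Finset.sum_congr rfl fun k _ => hB k j
  have hS' : (∑ j, u j) = S := hS.symm
  have hT' : (∑ j, v j) = T := hT.symm
  have hR' : (∑ j, u j * v j) = R := hR.symm
  have hSS : (∑ i, ∑ j, A i j) = S :=
    (Finset.sum_congr rfl fun i _ => huu i).trans hS.symm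
  have hTT : (∑ i, ∑ j, B i j) = T :=
    (Finset.sum_congr rfl fun i _ => hvv i).trans hT.symm
  have hWW : (∑ i, ∑ j, A i j * B i j) = W :=
    (Finset.sum_congr rfl fun i _ => hww i).trans hW.symm
  have hRgoal : (∑ i, (∑ j, A i j) * (∑ j, B i j)) = R :=
    (Finset.sum_congr rfl fun i _ => by rw [huu i, hvv i]).trans hR.symm
  set f : Fin n → Fin n → ℝ := fun i j =>
    (A i j - u i / m - u j / m + d) * (B i j - v i / m - v j / m + e) with hf
  have hfeq : ∀ i j, f i j
      = (A i j - u i / m - u j / m + d) * (B i j - v i / m - v j / m + e) := fun _ _ => rfl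
  have h1 : ∀ i j : Fin n, (if i = j then (0:ℝ) else Ucenter A i j * Ucenter B i j)
      = f i j - (if i = j then f i j else 0) := by
    intro i j
    rcases eq_or_ne i j with rfl | hij
    · simp
    · rw [if_neg hij, if_neg hij, sub_zero, hfeq]
      simp only [Ucenter, Matrix.of_apply, if_neg hij]
      rw [hcolA j, hcolB j, hSS, hTT, huu i, hvv i, ← hmdef, ← hd, ← he]
  have hdiag : (∑ i, f i i)
      = R * (4/m^2) + S * (-(e*(2/m))) + T * (-(d*(2/m))) + (n:ℝ) * (d*e) := by
    calc (∑ i, f i i)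
        = ∑ i, ((u i * v i) * (4/m^2) + u i * (-(e*(2/m))) + v i * (-(d*(2/m))) + d*e) :=
          Finset.sum_congr rfl fun i _ => by rw [hfeq, hA0, hB0]; ring
      _ = _ := by
          simp only [Finset.sum_add_distrib, ← Finset.sum_mul, Finset.sum_const,
            Finset.card_univ, Fintype.card_fin, nsmul_eq_mul]
          rw [hS', hT', hR']
          ring
  have hrow : ∀ i, (∑ j, f i j)
      = w i + (u i * v i) * (-(1/m)) + ca i * (-(1/m)) + u i * e
        + (u i * v i) * (-(1/m)) + cb i * (-(1/m)) + v i * d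
        + (u i * v i) * ((n:ℝ) * (1/m^2)) + u i * (T * (1/m^2)) + v i * (S * (1/m^2))
        + R * (1/m^2)
        + u i * ((n:ℝ) * (-(e/m))) + S * (-(e/m)) + v i * ((n:ℝ) * (-(d/m))) + T * (-(d/m))
        + (n:ℝ) * (d * e) := by
    intro i
    calc (∑ j, f i j)
        = ∑ j, (A i j * B i j
            + A i j * (v i * (-(1/m))) + (A i j * v j) * (-(1/m)) + A i j * e
            + B i j * (u i * (-(1/m))) + (u j * B i j) * (-(1/m)) + B i j * d
            + (u i * v i) * (1/m^2) + v j * (u i * (1/m^2)) + u j * (v i * (1/m^2))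
            + (u j * v j) * (1/m^2)
            + (u i) * (-(e/m)) + u j * (-(e/m)) + (v i) * (-(d/m)) + v j * (-(d/m))
            + d * e) :=
          Finset.sum_congr rfl fun j _ => by rw [hfeq]; ring
      _ = _ := by
          simp only [Finset.sum_add_distrib, ← Finset.sum_mul, Finset.sum_const,
            Finset.card_univ, Fintype.card_fin, nsmul_eq_mul]
          rw [huu i, hvv i, hww i, hcaa i, hcbb i, hS', hT', hR']
          ring
  have hCA : (∑ i, ca i) = R := by
    show (∑ i, ∑ j, A i j * v j) = R
    rw [Finset.sum_comm, hR]
    refine Finset.sum_congr rfl fun j _ => ?_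
    rw [← Finset.sum_mul, hcolA j]
  have hCB : (∑ i, cb i) = R := by
    show (∑ i, ∑ j, u j * B i j) = R
    rw [Finset.sum_comm, hR]
    refine Finset.sum_congr rfl fun j _ => ?_
    rw [← Finset.mul_sum, hcolB j]
  have htot : (∑ i, ∑ j, f i j)
      = W + R * (-(1/m)) + R * (-(1/m)) + R * (-(1/m)) + R * (-(1/m)) + S * e + T * d
        + R * ((n:ℝ) * (1/m^2)) + S * (T * (1/m^2)) + T * (S * (1/m^2))
        + (n:ℝ) * (R * (1/m^2))
        + S * ((n:ℝ) * (-(e/m))) + (n:ℝ) * (S * (-(e/m)))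
        + T * ((n:ℝ) * (-(d/m))) + (n:ℝ) * (T * (-(d/m)))
        + (n:ℝ) * ((n:ℝ) * (d * e)) := by
    calc (∑ i, ∑ j, f i j)
        = ∑ i, (w i + (u i * v i) * (-(1/m)) + ca i * (-(1/m)) + u i * e
            + (u i * v i) * (-(1/m)) + cb i * (-(1/m)) + v i * d
            + (u i * v i) * ((n:ℝ) * (1/m^2)) + u i * (T * (1/m^2)) + v i * (S * (1/m^2))
            + R * (1/m^2)
            + u i * ((n:ℝ) * (-(e/m))) + S * (-(e/m)) + v i * ((n:ℝ) * (-(d/m)))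
            + T * (-(d/m)) + (n:ℝ) * (d * e)) :=
          Finset.sum_congr rfl fun i _ => hrow i
      _ = _ := by
          simp only [Finset.sum_add_distrib, ← Finset.sum_mul, Finset.sum_const,
            Finset.card_univ, Fintype.card_fin, nsmul_eq_mul]
          rw [hS', hT', hR', hCA, hCB]
          rw [show (∑ i, w i) = W from hW.symm]
          ring
  simp only [h1, Finset.sum_sub_distrib]
  have hdiagsum : (∑ i : Fin n, ∑ j : Fin n, if i = j then f i j else 0) = ∑ i, f i i := by
    refine Finset.sum_congr rfl fun i _ => ?_
    rw [Finset.sum_ite_eq (Finset.univ) i (fun j => f i j)]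
    simp
  rw [hdiagsum, htot, hdiag, hWW, hRgoal, hSS, hTT]
  rw [hd, he, hmdef]
  field_simp
  ring

end Algebra

section Prob

variable {Ω S : Type*} [MeasurableSpace Ω] {mS : MeasurableSpace S}
  {μ : MeasureTheory.Measure Ω} [IsProbabilityMeasure μ] {n : ℕ}

lemma iid_pair_identDistrib {Z : Fin n → Ω → S} (hZm : ∀ i, Measurable (Z i))
    (hindep : iIndepFun Z μ)
    (hid : ∀ i j, IdentDistrib (Z i) (Z j) μ μ)
    {i j i' j' : Fin n} (hij : i ≠ j) (hij' : i' ≠ j') :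
    IdentDistrib (fun ω => (Z i ω, Z j ω)) (fun ω => (Z i' ω, Z j' ω)) μ μ := by
  have hmap : ∀ {a b : Fin n}, a ≠ b →
      μ.map (fun ω => (Z a ω, Z b ω)) = (μ.map (Z a)).prod (μ.map (Z b)) := by
    intro a b hab
    exact (indepFun_iff_map_prod_eq_prod_map_map (hZm a).aemeasurable
      (hZm b).aemeasurable).mp (hindep.indepFun hab)
  refine ⟨((hZm i).prodMk (hZm j)).aemeasurable,
    ((hZm i').prodMk (hZm j')).aemeasurable, ?_⟩
  rw [hmap hij, hmap hij', (hid i i').map_eq, (hid j j').map_eq]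

lemma iid_triple_identDistrib {Z : Fin n → Ω → S} (hZm : ∀ i, Measurable (Z i))
    (hindep : iIndepFun Z μ)
    (hid : ∀ i j, IdentDistrib (Z i) (Z j) μ μ)
    {i j k i' j' k' : Fin n} (hij : i ≠ j) (hik : i ≠ k) (hjk : j ≠ k)
    (hij' : i' ≠ j') (hik' : i' ≠ k') (hjk' : j' ≠ k') :
    IdentDistrib (fun ω => ((Z i ω, Z j ω), Z k ω))
      (fun ω => ((Z i' ω, Z j' ω), Z k' ω)) μ μ := by
  have hmap2 : ∀ {a b : Fin n}, a ≠ b →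
      μ.map (fun ω => (Z a ω, Z b ω)) = (μ.map (Z a)).prod (μ.map (Z b)) := by
    intro a b hab
    exact (indepFun_iff_map_prod_eq_prod_map_map (hZm a).aemeasurable
      (hZm b).aemeasurable).mp (hindep.indepFun hab)
  have hmap3 : ∀ {a b c : Fin n}, a ≠ b → a ≠ c → b ≠ c →
      μ.map (fun ω => ((Z a ω, Z b ω), Z c ω))
        = ((μ.map (Z a)).prod (μ.map (Z b))).prod (μ.map (Z c)) := by
    intro a b c hab hac hbc
    have h1 : IndepFun (fun ω => (Z a ω, Z b ω)) (Z c) μ :=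
      hindep.indepFun_prodMk hZm a b c hac hbc
    rw [(indepFun_iff_map_prod_eq_prod_map_map
      ((hZm a).prodMk (hZm b)).aemeasurable (hZm c).aemeasurable).mp h1, hmap2 hab]
  refine ⟨(((hZm i).prodMk (hZm j)).prodMk (hZm k)).aemeasurable,
    (((hZm i').prodMk (hZm j')).prodMk (hZm k')).aemeasurable, ?_⟩
  rw [hmap3 hij hik hjk, hmap3 hij' hik' hjk', (hid i i').map_eq, (hid j j').map_eq,
    (hid k k').map_eq]

end Prob

set_option maxHeartbeats 2000000 in
/-- `(Ã · B̃) = (1/(n(n−3))) Σ_{i≠j} Ã_ij B̃_ij` is an unbiased estimator of the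
squared population distance covariance
`V²(X,Y) = E[|X−X'||Y−Y'|] + E|X−X'|·E|Y−Y'| − 2E[|X−X'||Y−Y''|]`. -/
theorem Ucenter_inner_unbiased_dcov
    {Ω : Type*} [MeasurableSpace Ω] (μ : Measure Ω) [IsProbabilityMeasure μ]
    {n p q : ℕ} (hn : 3 < n)
    (X : Fin n → Ω → EuclideanSpace ℝ (Fin p))
    (Y : Fin n → Ω → EuclideanSpace ℝ (Fin q))
    (hX : ∀ i, Measurable (X i)) (hY : ∀ i, Measurable (Y i))
    (hindep : iIndepFun (fun i ω => (X i ω, Y i ω)) μ)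
    (hid : ∀ i j : Fin n, IdentDistrib (fun ω => (X i ω, Y i ω))
      (fun ω => (X j ω, Y j ω)) μ μ)
    (i0 : Fin n) (i1 : Fin n) (i2 : Fin n)
    (h0 : i0 = ⟨0, by omega⟩) (h1 : i1 = ⟨1, by omega⟩) (h2 : i2 = ⟨2, by omega⟩)
    (hintα : Integrable (fun ω => ‖X i0 ω - X i1 ω‖) μ)
    (hintβ : Integrable (fun ω => ‖Y i0 ω - Y i1 ω‖) μ)
    (hintγ : Integrable (fun ω => ‖X i0 ω - X i1 ω‖ * ‖Y i0 ω - Y i1 ω‖) μ)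
    (hintδ : Integrable (fun ω => ‖X i0 ω - X i1 ω‖ * ‖Y i0 ω - Y i2 ω‖) μ) :
    ∫ ω, (∑ i, ∑ j, if i = j then 0 else
        Ucenter (Matrix.of fun k l => ‖X k ω - X l ω‖) i j *
        Ucenter (Matrix.of fun k l => ‖Y k ω - Y l ω‖) i j)
          / ((n : ℝ) * ((n : ℝ) - 3)) ∂μ
      = (∫ ω, ‖X i0 ω - X i1 ω‖ * ‖Y i0 ω - Y i1 ω‖ ∂μ)
        + (∫ ω, ‖X i0 ω - X i1 ω‖ ∂μ) * (∫ ω, ‖Y i0 ω - Y i1 ω‖ ∂μ)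
        - 2 * ∫ ω, ‖X i0 ω - X i1 ω‖ * ‖Y i0 ω - Y i2 ω‖ ∂μ := by
  classical
  have hcast : (3:ℝ) < n := by exact_mod_cast hn
  have hi01 : i0 ≠ i1 := by rw [h0, h1]; simp [Fin.ext_iff]
  have hi02 : i0 ≠ i2 := by rw [h0, h2]; simp [Fin.ext_iff]
  have hi12 : i1 ≠ i2 := by rw [h1, h2]; simp [Fin.ext_iff]
  set E : Type _ := EuclideanSpace ℝ (Fin p) × EuclideanSpace ℝ (Fin q) with hE
  set Z : Fin n → Ω → E := fun i ω => (X i ω, Y i ω) with hZ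
  have hZm : ∀ i, Measurable (Z i) := fun i => (hX i).prodMk (hY i)
  -- measurable test functions
  have mfA : Measurable (fun z : (EuclideanSpace ℝ (Fin p) × EuclideanSpace ℝ (Fin q)) × (EuclideanSpace ℝ (Fin p) × EuclideanSpace ℝ (Fin q)) => ‖z.1.1 - z.2.1‖) := by fun_prop
  have mfB : Measurable (fun z : (EuclideanSpace ℝ (Fin p) × EuclideanSpace ℝ (Fin q)) × (EuclideanSpace ℝ (Fin p) × EuclideanSpace ℝ (Fin q)) => ‖z.1.2 - z.2.2‖) := by fun_prop
  have mfAB : Measurable (fun z : (EuclideanSpace ℝ (Fin p) × EuclideanSpace ℝ (Fin q)) × (EuclideanSpace ℝ (Fin p) × EuclideanSpace ℝ (Fin q)) => ‖z.1.1 - z.2.1‖ * ‖z.1.2 - z.2.2‖) := by fun_prop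
  have mfD : Measurable (fun z : ((EuclideanSpace ℝ (Fin p) × EuclideanSpace ℝ (Fin q)) × (EuclideanSpace ℝ (Fin p) × EuclideanSpace ℝ (Fin q))) × (EuclideanSpace ℝ (Fin p) × EuclideanSpace ℝ (Fin q)) => ‖z.1.1.1 - z.1.2.1‖ * ‖z.1.1.2 - z.2.2‖) := by
    fun_prop
  -- the four moments
  obtain ⟨α, hαdef⟩ : ∃ a : ℝ, a = ∫ ω, ‖X i0 ω - X i1 ω‖ ∂μ := ⟨_, rfl⟩
  obtain ⟨β, hβdef⟩ : ∃ a : ℝ, a = ∫ ω, ‖Y i0 ω - Y i1 ω‖ ∂μ := ⟨_, rfl⟩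
  obtain ⟨γ, hγdef⟩ : ∃ a : ℝ, a = ∫ ω, ‖X i0 ω - X i1 ω‖ * ‖Y i0 ω - Y i1 ω‖ ∂μ := ⟨_, rfl⟩
  obtain ⟨δ, hδdef⟩ : ∃ a : ℝ, a = ∫ ω, ‖X i0 ω - X i1 ω‖ * ‖Y i0 ω - Y i2 ω‖ ∂μ := ⟨_, rfl⟩
  rw [← hαdef, ← hβdef, ← hγdef, ← hδdef]
  -- basic expectation facts
  have hαf : ∀ i j : Fin n, i ≠ j →
      Integrable (fun ω => ‖X i ω - X j ω‖) μ ∧ (∫ ω, ‖X i ω - X j ω‖ ∂μ) = α := by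
    intro i j hij
    have hID : IdentDistrib (fun ω => ‖X i ω - X j ω‖) (fun ω => ‖X i0 ω - X i1 ω‖) μ μ :=
      (iid_pair_identDistrib hZm hindep hid hij hi01).comp mfA
    exact ⟨hID.integrable_iff.mpr hintα, hID.integral_eq.trans hαdef.symm⟩
  have hβf : ∀ i j : Fin n, i ≠ j →
      Integrable (fun ω => ‖Y i ω - Y j ω‖) μ ∧ (∫ ω, ‖Y i ω - Y j ω‖ ∂μ) = β := by
    intro i j hij
    have hID : IdentDistrib (fun ω => ‖Y i ω - Y j ω‖) (fun ω => ‖Y i0 ω - Y i1 ω‖) μ μ :=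
      (iid_pair_identDistrib hZm hindep hid hij hi01).comp mfB
    exact ⟨hID.integrable_iff.mpr hintβ, hID.integral_eq.trans hβdef.symm⟩
  have hγf : ∀ i j : Fin n, i ≠ j →
      Integrable (fun ω => ‖X i ω - X j ω‖ * ‖Y i ω - Y j ω‖) μ ∧
        (∫ ω, ‖X i ω - X j ω‖ * ‖Y i ω - Y j ω‖ ∂μ) = γ := by
    intro i j hij
    have hID : IdentDistrib (fun ω => ‖X i ω - X j ω‖ * ‖Y i ω - Y j ω‖)
        (fun ω => ‖X i0 ω - X i1 ω‖ * ‖Y i0 ω - Y i1 ω‖) μ μ :=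
      (iid_pair_identDistrib hZm hindep hid hij hi01).comp mfAB
    exact ⟨hID.integrable_iff.mpr hintγ, hID.integral_eq.trans hγdef.symm⟩
  have hδf : ∀ i j k : Fin n, i ≠ j → i ≠ k → j ≠ k →
      Integrable (fun ω => ‖X i ω - X j ω‖ * ‖Y i ω - Y k ω‖) μ ∧
        (∫ ω, ‖X i ω - X j ω‖ * ‖Y i ω - Y k ω‖ ∂μ) = δ := by
    intro i j k hij hik hjk
    have hID : IdentDistrib (fun ω => ‖X i ω - X j ω‖ * ‖Y i ω - Y k ω‖)
        (fun ω => ‖X i0 ω - X i1 ω‖ * ‖Y i0 ω - Y i2 ω‖) μ μ :=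
      (iid_triple_identDistrib hZm hindep hid hij hik hjk hi01 hi02 hi12).comp mfD
    exact ⟨hID.integrable_iff.mpr hintδ, hID.integral_eq.trans hδdef.symm⟩
  have hπf : ∀ i j k l : Fin n, i ≠ j → k ≠ l → i ≠ k → i ≠ l → j ≠ k → j ≠ l →
      Integrable (fun ω => ‖X i ω - X j ω‖ * ‖Y k ω - Y l ω‖) μ ∧
        (∫ ω, ‖X i ω - X j ω‖ * ‖Y k ω - Y l ω‖ ∂μ) = α * β := by
    intro i j k l hij hkl hik hil hjk hjl
    have hIF : IndepFun (fun ω => (Z i ω, Z j ω)) (fun ω => (Z k ω, Z l ω)) μ :=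
      hindep.indepFun_prodMk_prodMk hZm i j k l hik hil hjk hjl
    have hIF2 : IndepFun (fun ω => ‖X i ω - X j ω‖) (fun ω => ‖Y k ω - Y l ω‖) μ :=
      hIF.comp mfA mfB
    have int1 := (hαf i j hij).1
    have int2 := (hβf k l hkl).1
    have hint : Integrable (fun ω => ‖X i ω - X j ω‖ * ‖Y k ω - Y l ω‖) μ :=
      hIF2.integrable_mul int1 int2
    refine ⟨hint, ?_⟩
    have := hIF2.integral_mul_eq_mul_integral int1.1 int2.1
    rw [show (∫ ω, ‖X i ω - X j ω‖ * ‖Y k ω - Y l ω‖ ∂μ)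
        = integral μ ((fun ω => ‖X i ω - X j ω‖) * (fun ω => ‖Y k ω - Y l ω‖)) from rfl,
      this, (hαf i j hij).2, (hβf k l hkl).2]
  -- the master function
  set g : Fin n → Fin n → Fin n → Fin n → ℝ := fun i j k l =>
    if i = j then 0 else if k = l then 0
    else if (k = i ∧ l = j) ∨ (k = j ∧ l = i) then γ
    else if k = i ∨ k = j ∨ l = i ∨ l = j then δ
    else α * β with hgdef
  have hM : ∀ i j k l : Fin n,
      Integrable (fun ω => ‖X i ω - X j ω‖ * ‖Y k ω - Y l ω‖) μ ∧
        (∫ ω, ‖X i ω - X j ω‖ * ‖Y k ω - Y l ω‖ ∂μ) = g i j k l := by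
    intro i j k l
    by_cases hij : i = j
    · subst hij
      have hz : (fun ω => ‖X i ω - X i ω‖ * ‖Y k ω - Y l ω‖) = fun _ => (0:ℝ) := by
        funext ω; simp
      rw [hz]
      refine ⟨integrable_const 0, ?_⟩
      simp [hgdef]
    by_cases hkl : k = l
    · subst hkl
      have hz : (fun ω => ‖X i ω - X j ω‖ * ‖Y k ω - Y k ω‖) = fun _ => (0:ℝ) := by
        funext ω; simp
      rw [hz]
      refine ⟨integrable_const 0, ?_⟩
      simp [hgdef, hij]
    by_cases hki : k = i
    · rw [hki]
      by_cases hlj : l = j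
      · rw [hlj]
        have hval : g i j i j = γ := by simp [hgdef, hij]
        rw [hval]; exact hγf i j hij
      · have hil : i ≠ l := fun h => hkl (hki.trans h)
        have hval : g i j i l = δ := by simp [hgdef, hij, hil, hlj]
        rw [hval]; exact hδf i j l hij hil (fun h => hlj h.symm)
    by_cases hkj : k = j
    · rw [hkj]
      by_cases hli : l = i
      · rw [hli]
        have hval : g i j j i = γ := by simp [hgdef, hij, Ne.symm hij]
        rw [hval]
        have hfe : (fun ω => ‖X i ω - X j ω‖ * ‖Y j ω - Y i ω‖)
            = (fun ω => ‖X i ω - X j ω‖ * ‖Y i ω - Y j ω‖) := by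
          funext ω; rw [norm_sub_rev (Y j ω)]
        rw [hfe]; exact hγf i j hij
      · have hjl : j ≠ l := fun h => hkl (hkj.trans h)
        have hval : g i j j l = δ := by simp [hgdef, hij, Ne.symm hij, hjl, hli]
        rw [hval]
        have hfe : (fun ω => ‖X i ω - X j ω‖ * ‖Y j ω - Y l ω‖)
            = (fun ω => ‖X j ω - X i ω‖ * ‖Y j ω - Y l ω‖) := by
          funext ω; rw [norm_sub_rev (X i ω)]
        rw [hfe]
        exact hδf j i l (Ne.symm hij) hjl (fun h => hli h.symm)
    by_cases hli : l = i
    · rw [hli]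
      have hval : g i j k i = δ := by simp [hgdef, hij, hki, hkj]
      rw [hval]
      have hfe : (fun ω => ‖X i ω - X j ω‖ * ‖Y k ω - Y i ω‖)
          = (fun ω => ‖X i ω - X j ω‖ * ‖Y i ω - Y k ω‖) := by
        funext ω; rw [norm_sub_rev (Y k ω)]
      rw [hfe]
      exact hδf i j k hij (fun h => hki h.symm) (fun h => hkj h.symm)
    by_cases hlj : l = j
    · rw [hlj]
      have hval : g i j k j = δ := by simp [hgdef, hij, hki, hkj, hli]
      rw [hval]
      have hfe : (fun ω => ‖X i ω - X j ω‖ * ‖Y k ω - Y j ω‖)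
          = (fun ω => ‖X j ω - X i ω‖ * ‖Y j ω - Y k ω‖) := by
        funext ω; rw [norm_sub_rev (X i ω), norm_sub_rev (Y k ω)]
      rw [hfe]
      exact hδf j i k (Ne.symm hij) (fun h => hkj h.symm) (fun h => hki h.symm)
    · have hval : g i j k l = α * β := by simp [hgdef, hij, hkl, hki, hkj, hli, hlj]
      rw [hval]
      exact hπf i j k l hij hkl (fun h => hki h.symm) (fun h => hli h.symm)
        (fun h => hkj h.symm) (fun h => hlj h.symm)
  -- pointwise algebraic identity
  have hone : ((n:ℝ) - 1) ≠ 0 := by nlinarith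
  have htwo : ((n:ℝ) - 2) ≠ 0 := by nlinarith
  have hthree : ((n:ℝ) - 3) ≠ 0 := by nlinarith
  have hzero : (n:ℝ) ≠ 0 := by nlinarith
  obtain ⟨c1, hc1⟩ : ∃ c : ℝ, c = ((n:ℝ) * ((n:ℝ)-3))⁻¹ := ⟨_, rfl⟩
  obtain ⟨c2, hc2⟩ : ∃ c : ℝ, c = -2 * ((((n:ℝ)-2) * ((n:ℝ) * ((n:ℝ)-3)))⁻¹) := ⟨_, rfl⟩
  obtain ⟨c3, hc3⟩ : ∃ c : ℝ, c = (((n:ℝ)-1) * (((n:ℝ)-2) * ((n:ℝ) * ((n:ℝ)-3))))⁻¹ := ⟨_, rfl⟩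
  have hpt : ∀ ω : Ω,
      (∑ i, ∑ j, if i = j then (0:ℝ) else
        Ucenter (Matrix.of fun k l => ‖X k ω - X l ω‖) i j *
        Ucenter (Matrix.of fun k l => ‖Y k ω - Y l ω‖) i j) / ((n:ℝ) * ((n:ℝ) - 3))
      = (∑ i, ∑ j, ‖X i ω - X j ω‖ * ‖Y i ω - Y j ω‖) * c1
        + (∑ i, ∑ j, ∑ k, ‖X i ω - X j ω‖ * ‖Y i ω - Y k ω‖) * c2
        + (∑ i, ∑ j, ∑ k, ∑ l, ‖X i ω - X j ω‖ * ‖Y k ω - Y l ω‖) * c3 := by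
    intro ω
    rw [hc1, hc2, hc3]
    have e1 : (∑ i, (∑ j, ‖X i ω - X j ω‖) * (∑ j, ‖Y i ω - Y j ω‖))
        = ∑ i, ∑ j, ∑ k, ‖X i ω - X j ω‖ * ‖Y i ω - Y k ω‖ :=
      Finset.sum_congr rfl fun i _ => Finset.sum_mul_sum _ _ _ _
    have e2 : (∑ i, ∑ j, ‖X i ω - X j ω‖) * (∑ i, ∑ j, ‖Y i ω - Y j ω‖)
        = ∑ i, ∑ j, ∑ k, ∑ l, ‖X i ω - X j ω‖ * ‖Y k ω - Y l ω‖ := by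
      rw [Finset.sum_mul_sum]
      refine Finset.sum_congr rfl fun i _ => ?_
      calc (∑ k, (∑ j, ‖X i ω - X j ω‖) * (∑ l, ‖Y k ω - Y l ω‖))
          = ∑ k, ∑ j, ∑ l, ‖X i ω - X j ω‖ * ‖Y k ω - Y l ω‖ :=
            Finset.sum_congr rfl fun k _ => Finset.sum_mul_sum _ _ _ _
        _ = ∑ j, ∑ k, ∑ l, ‖X i ω - X j ω‖ * ‖Y k ω - Y l ω‖ := Finset.sum_comm
    rw [sum_ucenter_mul hn (Matrix.of fun k l => ‖X k ω - X l ω‖)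
      (Matrix.of fun k l => ‖Y k ω - Y l ω‖)
      (fun i j => by show ‖X i ω - X j ω‖ = ‖X j ω - X i ω‖; exact norm_sub_rev _ _)
      (fun i => by show ‖X i ω - X i ω‖ = 0; simp)
      (fun i j => by show ‖Y i ω - Y j ω‖ = ‖Y j ω - Y i ω‖; exact norm_sub_rev _ _)
      (fun i => by show ‖Y i ω - Y i ω‖ = 0; simp)]
    simp only [Matrix.of_apply]
    rw [e1, e2]
    field_simp
    ring
  -- integrability of the three statistics
  have hI1 : Integrable (fun ω => ∑ i, ∑ j, ‖X i ω - X j ω‖ * ‖Y i ω - Y j ω‖) μ :=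
    integrable_finset_sum _ fun i _ => integrable_finset_sum _ fun j _ => (hM i j i j).1
  have hI2 : Integrable (fun ω => ∑ i, ∑ j, ∑ k, ‖X i ω - X j ω‖ * ‖Y i ω - Y k ω‖) μ :=
    integrable_finset_sum _ fun i _ => integrable_finset_sum _ fun j _ =>
      integrable_finset_sum _ fun k _ => (hM i j i k).1
  have hI3 : Integrable
      (fun ω => ∑ i, ∑ j, ∑ k, ∑ l, ‖X i ω - X j ω‖ * ‖Y k ω - Y l ω‖) μ :=
    integrable_finset_sum _ fun i _ => integrable_finset_sum _ fun j _ =>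
      integrable_finset_sum _ fun k _ => integrable_finset_sum _ fun l _ => (hM i j k l).1
  -- expectations of the three statistics
  have hE1 : (∫ ω, ∑ i, ∑ j, ‖X i ω - X j ω‖ * ‖Y i ω - Y j ω‖ ∂μ)
      = ∑ i, ∑ j, g i j i j := by
    rw [integral_finset_sum _ fun i _ => integrable_finset_sum _ fun j _ => (hM i j i j).1]
    refine Finset.sum_congr rfl fun i _ => ?_
    rw [integral_finset_sum _ fun j _ => (hM i j i j).1]
    exact Finset.sum_congr rfl fun j _ => (hM i j i j).2
  have hE2 : (∫ ω, ∑ i, ∑ j, ∑ k, ‖X i ω - X j ω‖ * ‖Y i ω - Y k ω‖ ∂μ)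
      = ∑ i, ∑ j, ∑ k, g i j i k := by
    rw [integral_finset_sum _ fun i _ => integrable_finset_sum _ fun j _ =>
      integrable_finset_sum _ fun k _ => (hM i j i k).1]
    refine Finset.sum_congr rfl fun i _ => ?_
    rw [integral_finset_sum _ fun j _ => integrable_finset_sum _ fun k _ => (hM i j i k).1]
    refine Finset.sum_congr rfl fun j _ => ?_
    rw [integral_finset_sum _ fun k _ => (hM i j i k).1]
    exact Finset.sum_congr rfl fun k _ => (hM i j i k).2
  have hE3 : (∫ ω, ∑ i, ∑ j, ∑ k, ∑ l, ‖X i ω - X j ω‖ * ‖Y k ω - Y l ω‖ ∂μ)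
      = ∑ i, ∑ j, ∑ k, ∑ l, g i j k l := by
    rw [integral_finset_sum _ fun i _ => integrable_finset_sum _ fun j _ =>
      integrable_finset_sum _ fun k _ => integrable_finset_sum _ fun l _ => (hM i j k l).1]
    refine Finset.sum_congr rfl fun i _ => ?_
    rw [integral_finset_sum _ fun j _ => integrable_finset_sum _ fun k _ =>
      integrable_finset_sum _ fun l _ => (hM i j k l).1]
    refine Finset.sum_congr rfl fun j _ => ?_
    rw [integral_finset_sum _ fun k _ => integrable_finset_sum _ fun l _ => (hM i j k l).1]
    refine Finset.sum_congr rfl fun k _ => ?_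
    rw [integral_finset_sum _ fun l _ => (hM i j k l).1]
    exact Finset.sum_congr rfl fun l _ => (hM i j k l).2
  -- evaluating the g-sums
  have hg0 : ∀ i k l : Fin n, g i i k l = 0 := fun i k l => by simp [hgdef]
  have hgval1 : ∀ i j : Fin n, g i j i j = if j = i then 0 else γ := by
    intro i j
    by_cases h : j = i
    · rw [h]; simp [hgdef]
    · have h' : ¬ i = j := fun hh => h hh.symm
      simp [hgdef, h, h']
  have hsum1 : (∑ i, ∑ j, g i j i j) = (n:ℝ) * (((n:ℝ)-1) * γ) := by
    have hinner : ∀ i : Fin n, (∑ j, g i j i j) = ((n:ℝ)-1) * γ := by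
      intro i
      rw [Finset.sum_congr rfl fun j _ => hgval1 i j, sum_ite_one' i 0 γ]
      ring
    rw [Finset.sum_congr rfl fun i _ => hinner i, Finset.sum_const, Finset.card_univ,
      Fintype.card_fin, nsmul_eq_mul]
  have hgval2 : ∀ i j k : Fin n, i ≠ j →
      g i j i k = if k = i then 0 else if k = j then γ else δ := by
    intro i j k hij
    by_cases h1 : k = i
    · rw [h1]; simp [hgdef, hij]
    · by_cases h2 : k = j
      · rw [h2]; simp [hgdef, hij, Ne.symm hij]
      · have h1' : ¬ i = k := fun hh => h1 hh.symm
        simp [hgdef, hij, h1, h2, h1']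
  have hsum2inner : ∀ i j : Fin n,
      (∑ k, g i j i k) = if j = i then 0 else γ + ((n:ℝ)-2) * δ := by
    intro i j
    by_cases h : j = i
    · rw [h, if_pos rfl]; simp [hg0]
    · have hij : i ≠ j := fun hh => h hh.symm
      rw [Finset.sum_congr rfl fun k _ => hgval2 i j k hij, sum_ite_two' hij 0 γ δ, if_neg h]
      ring
  have hsum2 : (∑ i, ∑ j, ∑ k, g i j i k)
      = (n:ℝ) * (((n:ℝ)-1) * (γ + ((n:ℝ)-2) * δ)) := by
    have hinner : ∀ i : Fin n, (∑ j, ∑ k, g i j i k) = ((n:ℝ)-1) * (γ + ((n:ℝ)-2)*δ) := by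
      intro i
      rw [Finset.sum_congr rfl fun j _ => hsum2inner i j, sum_ite_one' i 0 _]
      ring
    rw [Finset.sum_congr rfl fun i _ => hinner i, Finset.sum_const, Finset.card_univ,
      Fintype.card_fin, nsmul_eq_mul]
  have hgval3b : ∀ i j l : Fin n, i ≠ j →
      g i j j l = if l = j then 0 else if l = i then γ else δ := by
    intro i j l hij
    by_cases h1 : l = j
    · rw [h1]; simp [hgdef, hij]
    · by_cases h2 : l = i
      · rw [h2]; simp [hgdef, hij, Ne.symm hij]
      · have h1' : ¬ j = l := fun hh => h1 hh.symm
        simp [hgdef, hij, Ne.symm hij, h1, h2, h1']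
  have hgval3c : ∀ i j k l : Fin n, i ≠ j → ¬ k = i → ¬ k = j →
      g i j k l = if l = k then 0 else if l = i then δ else if l = j then δ else α * β := by
    intro i j k l hij hki hkj
    by_cases h1 : l = k
    · rw [h1]; simp [hgdef, hij]
    · have h1' : ¬ k = l := fun hh => h1 hh.symm
      by_cases h2 : l = i
      · have hik : ¬ i = k := fun hh => hki hh.symm
        rw [h2]
        simp [hgdef, hij, hki, hkj, hik]
      · by_cases h3 : l = j
        · have hjk : ¬ j = k := fun hh => hkj hh.symm
          rw [h3]
          simp [hgdef, hij, hki, hkj, Ne.symm hij, hjk]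
        · simp [hgdef, hij, h1, h1', h2, h3, hki, hkj]
  have hsum3k : ∀ i j k : Fin n, i ≠ j → (∑ l, g i j k l)
      = if k = i then γ + ((n:ℝ)-2)*δ else if k = j then γ + ((n:ℝ)-2)*δ
        else 2*δ + ((n:ℝ)-3)*(α*β) := by
    intro i j k hij
    by_cases h1 : k = i
    · rw [h1, if_pos rfl, Finset.sum_congr rfl fun l _ => hgval2 i j l hij,
        sum_ite_two' hij 0 γ δ]
      ring
    · by_cases h2 : k = j
      · rw [h2, if_neg (Ne.symm hij), if_pos rfl,
          Finset.sum_congr rfl fun l _ => hgval3b i j l hij,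
          sum_ite_two' (Ne.symm hij) 0 γ δ]
        ring
      · rw [if_neg h1, if_neg h2,
          Finset.sum_congr rfl fun l _ => hgval3c i j k l hij h1 h2,
          sum_ite_three' h1 h2 hij 0 δ δ (α*β)]
        ring
  have hsum3inner : ∀ i j : Fin n, (∑ k, ∑ l, g i j k l)
      = if j = i then 0
        else (2*(γ + ((n:ℝ)-2)*δ) + ((n:ℝ)-2)*(2*δ + ((n:ℝ)-3)*(α*β))) := by
    intro i j
    by_cases h : j = i
    · rw [h, if_pos rfl]; simp [hg0]
    · have hij : i ≠ j := fun hh => h hh.symm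
      rw [Finset.sum_congr rfl fun k _ => hsum3k i j k hij, sum_ite_two' hij _ _ _, if_neg h]
      ring
  have hsum3 : (∑ i, ∑ j, ∑ k, ∑ l, g i j k l)
      = (n:ℝ) * (((n:ℝ)-1)
          * (2*(γ + ((n:ℝ)-2)*δ) + ((n:ℝ)-2)*(2*δ + ((n:ℝ)-3)*(α*β)))) := by
    have hinner : ∀ i : Fin n, (∑ j, ∑ k, ∑ l, g i j k l)
        = ((n:ℝ)-1) * (2*(γ + ((n:ℝ)-2)*δ) + ((n:ℝ)-2)*(2*δ + ((n:ℝ)-3)*(α*β))) := by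
      intro i
      rw [Finset.sum_congr rfl fun j _ => hsum3inner i j, sum_ite_one' i 0 _]
      ring
    rw [Finset.sum_congr rfl fun i _ => hinner i, Finset.sum_const, Finset.card_univ,
      Fintype.card_fin, nsmul_eq_mul]
  -- final assembly
  calc (∫ ω, (∑ i, ∑ j, if i = j then (0:ℝ) else
        Ucenter (Matrix.of fun k l => ‖X k ω - X l ω‖) i j *
        Ucenter (Matrix.of fun k l => ‖Y k ω - Y l ω‖) i j)
          / ((n : ℝ) * ((n : ℝ) - 3)) ∂μ)
      = ∫ ω, ((∑ i, ∑ j, ‖X i ω - X j ω‖ * ‖Y i ω - Y j ω‖) * c1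
        + (∑ i, ∑ j, ∑ k, ‖X i ω - X j ω‖ * ‖Y i ω - Y k ω‖) * c2
        + (∑ i, ∑ j, ∑ k, ∑ l, ‖X i ω - X j ω‖ * ‖Y k ω - Y l ω‖) * c3) ∂μ :=
        integral_congr_ae (Filter.Eventually.of_forall hpt)
    _ = (∫ ω, ∑ i, ∑ j, ‖X i ω - X j ω‖ * ‖Y i ω - Y j ω‖ ∂μ) * c1
        + (∫ ω, ∑ i, ∑ j, ∑ k, ‖X i ω - X j ω‖ * ‖Y i ω - Y k ω‖ ∂μ) * c2
        + (∫ ω, ∑ i, ∑ j, ∑ k, ∑ l, ‖X i ω - X j ω‖ * ‖Y k ω - Y l ω‖ ∂μ) * c3 := by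
        have hA1 : Integrable
            (fun ω => (∑ i, ∑ j, ‖X i ω - X j ω‖ * ‖Y i ω - Y j ω‖) * c1) μ :=
          hI1.mul_const _
        have hA2 : Integrable
            (fun ω => (∑ i, ∑ j, ∑ k, ‖X i ω - X j ω‖ * ‖Y i ω - Y k ω‖) * c2) μ :=
          hI2.mul_const _
        have hA3 : Integrable
            (fun ω => (∑ i, ∑ j, ∑ k, ∑ l, ‖X i ω - X j ω‖ * ‖Y k ω - Y l ω‖) * c3) μ :=
          hI3.mul_const _
        have hA12 : Integrable
            (fun ω => (∑ i, ∑ j, ‖X i ω - X j ω‖ * ‖Y i ω - Y j ω‖) * c1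
              + (∑ i, ∑ j, ∑ k, ‖X i ω - X j ω‖ * ‖Y i ω - Y k ω‖) * c2) μ :=
          hA1.add hA2
        rw [integral_add hA12 hA3, integral_add hA1 hA2,
          integral_mul_const, integral_mul_const, integral_mul_const]
    _ = γ + α * β - 2 * δ := by
        rw [hE1, hE2, hE3, hsum1, hsum2, hsum3, hc1, hc2, hc3]
        field_simp
        ring
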